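/- Assume H is strictly convex (d_k > 0 for some finite k ≥ 2) and H'(μ¹) > 1, and let f : [0,1] → [0,1] be f(t) = 1 − H(t). Then for t ∈ [0,1], the iterates f^n(t) converge to μ¹ as n → ∞ if and only if t = μ¹ (i.e., μ¹ is a repulsive fixed point and its basin of attraction under f is {μ¹}). -/

import Mathlib

open MeasureTheory ProbabilityTheory Filter Topology

/-- The generating function `H(x) = ∑_{k≥1} d_k x^k` (we use `d : ℕ → ℝ` with `d 0 = 0`). -/
noncomputable def genFun (d : ℕ → ℝ) (x : ℝ) : ℝ := ∑' k, d k * x ^ k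

/-- The derivative `H'(x) = ∑_{k≥1} k d_k x^(k-1)`. -/
noncomputable def genFunDeriv (d : ℕ → ℝ) (x : ℝ) : ℝ :=
  ∑' k : ℕ, ((k : ℝ) + 1) * d (k + 1) * x ^ k

/-- in the unstable case `H'(μ¹) > 1`, the iterates of `f(t) = 1 - H(t)`
starting from `t ∈ [0,1]` converge to `μ¹` iff `t = μ¹`: the basin of attraction of the
repulsive fixed point `μ¹` is `{μ¹}`. -/
theorem basin_of_repulsive_fixed_point (d : ℕ → ℝ) (hd0 : d 0 = 0) (hdnn : ∀ k, 0 ≤ d k)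
    (hdsum : Summable d) (hdle : ∑' k, d k ≤ 1)
    (hconv : ∃ k : ℕ, 2 ≤ k ∧ 0 < d k)
    (μ1 : ℝ) (hμ1 : μ1 ∈ Set.Ioo (0 : ℝ) 1) (hroot : genFun d μ1 + μ1 = 1)
    (hunstable : 1 < genFunDeriv d μ1) :
    ∀ t ∈ Set.Icc (0 : ℝ) 1,
      Tendsto (fun n => (fun s => 1 - genFun d s)^[n] t) atTop (nhds μ1) ↔ t = μ1 := by
  have hμ0 : (0:ℝ) < μ1 := hμ1.1
  have hμlt1 : μ1 < 1 := hμ1.2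
  -- summability of the series defining genFun at points of [0,1]
  have hsum : ∀ x : ℝ, 0 ≤ x → x ≤ 1 → Summable (fun k => d k * x ^ k) := by
    intro x hx0 hx1
    refine Summable.of_nonneg_of_le (fun k => mul_nonneg (hdnn k) (pow_nonneg hx0 k))
      (fun k => ?_) hdsum
    calc d k * x ^ k ≤ d k * 1 :=
          mul_le_mul_of_nonneg_left (pow_le_one₀ hx0 hx1) (hdnn k)
      _ = d k := mul_one _
  have hH0 : ∀ x : ℝ, 0 ≤ x → 0 ≤ genFun d x := fun x hx =>
    tsum_nonneg fun k => mul_nonneg (hdnn k) (pow_nonneg hx k)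
  have hH1 : ∀ x : ℝ, 0 ≤ x → x ≤ 1 → genFun d x ≤ 1 := by
    intro x hx0 hx1
    refine le_trans (Summable.tsum_le_tsum (fun k => ?_) (hsum x hx0 hx1) hdsum) hdle
    calc d k * x ^ k ≤ d k * 1 :=
          mul_le_mul_of_nonneg_left (pow_le_one₀ hx0 hx1) (hdnn k)
      _ = d k := mul_one _
  have hmono : ∀ x y : ℝ, 0 ≤ x → x ≤ y → y ≤ 1 → genFun d x ≤ genFun d y := by
    intro x y hx hxy hy1
    exact Summable.tsum_le_tsum
      (fun k => mul_le_mul_of_nonneg_left (pow_le_pow_left₀ hx hxy k) (hdnn k))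
      (hsum x hx (hxy.trans hy1)) (hsum y (hx.trans hxy) hy1)
  obtain ⟨k0, hk02, hk0pos⟩ := hconv
  have hstrict : ∀ x y : ℝ, 0 ≤ x → x < y → y ≤ 1 → genFun d x < genFun d y := by
    intro x y hx hxy hy1
    refine Summable.tsum_lt_tsum (i := k0)
      (fun k => mul_le_mul_of_nonneg_left (pow_le_pow_left₀ hx hxy.le k) (hdnn k))
      ?_ (hsum x hx (hxy.le.trans hy1)) (hsum y (hx.trans hxy.le) hy1)
    exact mul_lt_mul_of_pos_left (pow_lt_pow_left₀ hxy hx (by omega)) hk0pos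
  set f : ℝ → ℝ := fun s => 1 - genFun d s with hf
  have hHμ : genFun d μ1 = 1 - μ1 := by linarith
  have hfμ : f μ1 = μ1 := by simp [hf, hHμ]
  have hmaps : ∀ x : ℝ, x ∈ Set.Icc (0:ℝ) 1 → f x ∈ Set.Icc (0:ℝ) 1 := by
    intro x hx
    constructor
    · simp only [hf]; linarith [hH1 x hx.1 hx.2]
    · simp only [hf]; linarith [hH0 x hx.1]
  intro t ht
  constructor
  · -- hard direction
    intro htend
    by_contra hne
    set x : ℕ → ℝ := fun n => f^[n] t with hx
    have hxmem : ∀ n, x n ∈ Set.Icc (0:ℝ) 1 := by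
      intro n
      induction n with
      | zero => simpa [hx] using ht
      | succ n ih =>
        have : x (n+1) = f (x n) := Function.iterate_succ_apply' f n t
        rw [this]; exact hmaps _ ih
    have hxne : ∀ n, x n ≠ μ1 := by
      intro n
      induction n with
      | zero => simpa [hx] using hne
      | succ n ih =>
        have hstep : x (n+1) = f (x n) := Function.iterate_succ_apply' f n t
        intro hcon
        have hH : genFun d (x n) = genFun d μ1 := by
          simp only [hf] at hstep hcon; linarith [hcon ▸ hstep]
        rcases lt_trichotomy (x n) μ1 with h | h | h
        · exact absurd hH (ne_of_lt (hstrict _ _ (hxmem n).1 h hμlt1.le))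
        · exact ih h
        · exact absurd hH.symm (ne_of_lt (hstrict _ _ hμ0.le h (hxmem n).2))
    -- summability of the derivative series at μ1
    set g : ℕ → ℝ := fun k => ((k : ℝ) + 1) * d (k + 1) * μ1 ^ k with hg
    have hgsum : Summable g := by
      by_contra hcon
      rw [genFunDeriv, tsum_eq_zero_of_not_summable hcon] at hunstable
      linarith
    have htsum : 1 < ∑' k, g k := hunstable
    -- a partial sum exceeding 1
    obtain ⟨N, hN⟩ := ((tendsto_order.1 hgsum.hasSum.tendsto_sum_nat).1 1 htsum).exists
    set SN : ℝ := ∑ k ∈ Finset.range N, g k with hSN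
    set lam : ℝ := (1 + SN) / 2 with hlam
    have hlam1 : 1 < lam := by simp only [hlam]; linarith
    have hlamS : lam < SN := by simp only [hlam]; linarith
    set φ : ℝ → ℝ := fun y =>
      ∑ k ∈ Finset.range N, d (k+1) * ∑ j ∈ Finset.range (k+1), μ1 ^ j * y ^ (k - j) with hφ
    have hφμ : φ μ1 = SN := by
      simp only [hφ, hSN, hg]
      refine Finset.sum_congr rfl fun k _ => ?_
      have hinner : ∑ j ∈ Finset.range (k+1), μ1 ^ j * μ1 ^ (k - j)
          = ∑ _j ∈ Finset.range (k+1), μ1 ^ k := by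
        refine Finset.sum_congr rfl fun j hj => ?_
        rw [← pow_add]
        congr 1
        have : j ≤ k := Nat.lt_succ_iff.mp (Finset.mem_range.mp hj)
        omega
      rw [hinner, Finset.sum_const, Finset.card_range, nsmul_eq_mul]
      push_cast
      ring
    have hφcont : Continuous φ := by
      apply continuous_finset_sum
      intro k _
      exact continuous_const.mul (continuous_finset_sum _ fun j _ =>
        continuous_const.mul (continuous_pow _))
    have hmemnhds : φ ⁻¹' Set.Ioi lam ∈ 𝓝 μ1 :=
      hφcont.continuousAt (Ioi_mem_nhds (hφμ ▸ hlamS))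
    obtain ⟨δ, hδ0, hδ⟩ := Metric.mem_nhds_iff.1 hmemnhds
    -- key polynomial identity
    have hid : ∀ y : ℝ, ∑ k ∈ Finset.range (N+1), (d k * y ^ k - d k * μ1 ^ k)
        = (y - μ1) * φ y := by
      intro y
      rw [Finset.sum_range_succ']
      simp only [hd0, pow_zero, zero_mul, sub_zero, add_zero]
      rw [hφ, Finset.mul_sum]
      refine Finset.sum_congr rfl fun k _ => ?_
      have hgeo := geom_sum₂_mul (R := ℝ) (x := μ1) (y := y) (n := k+1)
      simp only [Nat.add_sub_cancel] at hgeo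
      linear_combination (d (k+1)) * hgeo
    -- key expansion estimate near μ1
    have hkey : ∀ y : ℝ, y ∈ Set.Icc (0:ℝ) 1 → y ∈ Metric.ball μ1 δ →
        lam * |y - μ1| ≤ |f y - μ1| := by
      intro y hy hyball
      have hφy : lam < φ y := hδ hyball
      have hfy : f y - μ1 = genFun d μ1 - genFun d y := by
        simp only [hf]; linarith
      have hsy := hsum y hy.1 hy.2
      have hsμ := hsum μ1 hμ0.le hμlt1.le
      rcases le_total y μ1 with h | h
      · -- y ≤ μ1
        have hdiff : genFun d μ1 - genFun d y = ∑' k, (d k * μ1 ^ k - d k * y ^ k) := by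
          rw [genFun, genFun, ← Summable.tsum_sub hsμ hsy]
        have hfin : ∑ k ∈ Finset.range (N+1), (d k * μ1 ^ k - d k * y ^ k)
            ≤ ∑' k, (d k * μ1 ^ k - d k * y ^ k) := by
          refine Summable.sum_le_tsum _ (fun k _ => ?_) (hsμ.sub hsy)
          have := pow_le_pow_left₀ hy.1 h k
          nlinarith [hdnn k]
        have hid' : ∑ k ∈ Finset.range (N+1), (d k * μ1 ^ k - d k * y ^ k)
            = (μ1 - y) * φ y := by
          have := hid y
          have hswap : ∑ k ∈ Finset.range (N+1), (d k * μ1 ^ k - d k * y ^ k)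
              = -∑ k ∈ Finset.range (N+1), (d k * y ^ k - d k * μ1 ^ k) := by
            rw [← Finset.sum_neg_distrib]
            exact Finset.sum_congr rfl fun k _ => by ring
          rw [hswap, this]; ring
        have h1 : lam * (μ1 - y) ≤ (μ1 - y) * φ y := by
          nlinarith [hφy, sub_nonneg.2 h]
        have h2 : genFun d μ1 - genFun d y ≥ lam * (μ1 - y) := by
          rw [hdiff]; linarith [hid' ▸ hfin]
        have habs1 : |y - μ1| = μ1 - y := by rw [abs_sub_comm]; exact abs_of_nonneg (by linarith)
        have habs2 : |f y - μ1| = genFun d μ1 - genFun d y := by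
          rw [hfy]
          exact abs_of_nonneg (by linarith [hmono y μ1 hy.1 h hμlt1.le])
        rw [habs1, habs2]; linarith
      · -- μ1 ≤ y
        have hdiff : genFun d y - genFun d μ1 = ∑' k, (d k * y ^ k - d k * μ1 ^ k) := by
          rw [genFun, genFun, ← Summable.tsum_sub hsy hsμ]
        have hfin : ∑ k ∈ Finset.range (N+1), (d k * y ^ k - d k * μ1 ^ k)
            ≤ ∑' k, (d k * y ^ k - d k * μ1 ^ k) := by
          refine Summable.sum_le_tsum _ (fun k _ => ?_) (hsy.sub hsμ)
          have := pow_le_pow_left₀ hμ0.le h k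
          nlinarith [hdnn k]
        have h1 : lam * (y - μ1) ≤ (y - μ1) * φ y := by
          nlinarith [hφy, sub_nonneg.2 h]
        have h2 : genFun d y - genFun d μ1 ≥ lam * (y - μ1) := by
          rw [hdiff]; linarith [(hid y) ▸ hfin]
        have habs1 : |y - μ1| = y - μ1 := abs_of_nonneg (by linarith)
        have habs2 : |f y - μ1| = genFun d y - genFun d μ1 := by
          rw [hfy, abs_sub_comm]
          exact abs_of_nonneg (by linarith [hmono μ1 y hμ0.le h hy.2])
        rw [habs1, habs2]; linarith
    -- conclude: eventually in the ball, then expansion blows up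
    obtain ⟨N0, hN0⟩ := (Metric.tendsto_atTop.1 htend δ hδ0)
    have hball : ∀ m : ℕ, x (N0 + m) ∈ Metric.ball μ1 δ := by
      intro m
      have := hN0 (N0 + m) (Nat.le_add_right _ _)
      simpa [hx, Metric.mem_ball] using this
    set c : ℝ := |x N0 - μ1| with hc
    have hc0 : 0 < c := abs_pos.2 (sub_ne_zero.2 (hxne N0))
    have hgrow : ∀ m : ℕ, lam ^ m * c ≤ |x (N0 + m) - μ1| := by
      intro m
      induction m with
      | zero => simp [hc]
      | succ m ih =>
        have hstep : x (N0 + (m+1)) = f (x (N0 + m)) := by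
          have : N0 + (m+1) = (N0 + m) + 1 := by omega
          rw [this]
          exact Function.iterate_succ_apply' f (N0 + m) t
        have hk := hkey (x (N0 + m)) (hxmem _) (hball m)
        rw [hstep]
        calc lam ^ (m+1) * c = lam * (lam ^ m * c) := by ring
          _ ≤ lam * |x (N0 + m) - μ1| := by
              apply mul_le_mul_of_nonneg_left ih (by linarith)
          _ ≤ |f (x (N0 + m)) - μ1| := hk
    obtain ⟨m, hm⟩ := pow_unbounded_of_one_lt (δ / c) hlam1
    have h1 : δ < lam ^ m * c := by
      rw [div_lt_iff₀ hc0] at hm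
      linarith
    have h2 : |x (N0 + m) - μ1| < δ := by
      simpa [Metric.mem_ball, Real.dist_eq] using hball m
    linarith [hgrow m]
  · intro h
    have hfix : ∀ n, f^[n] t = μ1 := fun n => by rw [h]; exact Function.iterate_fixed hfμ n
    simpa [hfix] using (tendsto_const_nhds : Tendsto (fun _ : ℕ => μ1) atTop (𝓝 μ1))
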